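/- The number of lattice paths from (0,0) to (n,k) in ℤ² using steps (1,0), (0,1), and (1,1) equals the Delannoy number d_{n,k} = Σ_{i=0}^{n} C(n,i)·C(k,i)·2^{i}. -/

import Mathlib

open Finset

def IsDelStep (s : ℤ × ℤ) : Prop := s = (1, 0) ∨ s = (0, 1) ∨ s = (1, 1)

def delSet (p : ℤ × ℤ) : Set (List (ℤ × ℤ)) :=
  {l | (∀ s ∈ l, IsDelStep s) ∧ l.sum = p}

lemma del_bounds : ∀ l : List (ℤ × ℤ), (∀ s ∈ l, IsDelStep s) →
    0 ≤ l.sum.1 ∧ 0 ≤ l.sum.2 ∧ (l.length : ℤ) ≤ l.sum.1 + l.sum.2 := by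
  intro l
  induction l with
  | nil => simp
  | cons s t ih =>
    intro h
    obtain ⟨h1, h2, h3⟩ := ih (fun x hx => h x (List.mem_cons_of_mem _ hx))
    have hs := h s List.mem_cons_self
    rcases hs with hs | hs | hs <;> subst hs <;>
      simp [List.sum_cons, Prod.fst_add, Prod.snd_add] <;> omega

lemma delSet_finite (p : ℤ × ℤ) : (delSet p).Finite := by
  classical
  set dec : Fin 3 → ℤ × ℤ := ![(1, 0), (0, 1), (1, 1)] with hdec
  set enc : ℤ × ℤ → Fin 3 := fun s => if s = (1,0) then 0 else if s = (0,1) then 1 else 2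
  apply Set.Finite.subset
    (((List.finite_length_le (Fin 3) (p.1 + p.2).toNat)).image (List.map dec))
  rintro l ⟨h1, h2⟩
  refine ⟨l.map enc, ?_, ?_⟩
  · simp only [Set.mem_setOf_eq, List.length_map]
    obtain ⟨hb1, hb2, hb3⟩ := del_bounds l h1
    rw [h2] at hb1 hb2 hb3
    omega
  · rw [List.map_map]
    conv_rhs => rw [← List.map_id l]
    apply List.map_congr_left
    intro s hs
    rcases h1 s hs with h | h | h <;> subst h <;> simp [dec, enc, Prod.ext_iff]

noncomputable instance (p : ℤ × ℤ) : Fintype (delSet p) := (delSet_finite p).fintype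

lemma sum_replicate_east (m : ℕ) : (List.replicate m ((1:ℤ), (0:ℤ))).sum = ((m : ℤ), 0) := by
  induction m with
  | zero => simp [Prod.ext_iff]
  | succ m ih => rw [List.replicate_succ, List.sum_cons, ih]; simp [Prod.ext_iff]; ring

lemma sum_replicate_north (m : ℕ) : (List.replicate m ((0:ℤ), (1:ℤ))).sum = (0, (m : ℤ)) := by
  induction m with
  | zero => simp [Prod.ext_iff]
  | succ m ih => rw [List.replicate_succ, List.sum_cons, ih]; simp [Prod.ext_iff]; ring

lemma snd_zero_replicate : ∀ l : List (ℤ × ℤ), (∀ s ∈ l, IsDelStep s) → l.sum.2 = 0 →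
    l = List.replicate l.length ((1:ℤ), (0:ℤ)) := by
  intro l
  induction l with
  | nil => simp
  | cons s t ih =>
    intro h h2
    have ht := fun x hx => h x (List.mem_cons_of_mem _ hx)
    obtain ⟨_, hb2, _⟩ := del_bounds t ht
    rw [List.sum_cons, Prod.snd_add] at h2
    have hs := h s List.mem_cons_self
    have hs1 : s = (1, 0) := by
      rcases hs with h' | h' | h' <;> subst h' <;> simp at h2 ⊢ <;> omega
    subst hs1
    rw [List.length_cons, List.replicate_succ, ih ht (by simpa using h2)]
    simp

lemma fst_zero_replicate : ∀ l : List (ℤ × ℤ), (∀ s ∈ l, IsDelStep s) → l.sum.1 = 0 →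
    l = List.replicate l.length ((0:ℤ), (1:ℤ)) := by
  intro l
  induction l with
  | nil => simp
  | cons s t ih =>
    intro h h2
    have ht := fun x hx => h x (List.mem_cons_of_mem _ hx)
    obtain ⟨hb1, _, _⟩ := del_bounds t ht
    rw [List.sum_cons, Prod.fst_add] at h2
    have hs := h s List.mem_cons_self
    have hs1 : s = (0, 1) := by
      rcases hs with h' | h' | h' <;> subst h' <;> simp at h2 ⊢ <;> omega
    subst hs1
    rw [List.length_cons, List.replicate_succ, ih ht (by simpa using h2)]
    simp

lemma delSet_east (m : ℕ) : delSet ((m : ℤ), 0) = {List.replicate m ((1:ℤ), (0:ℤ))} := by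
  ext l
  constructor
  · rintro ⟨h1, h2⟩
    have := snd_zero_replicate l h1 (by rw [h2])
    have hlen : (l.length : ℤ) = m := by
      rw [this] at h2; rw [sum_replicate_east] at h2
      exact (Prod.ext_iff.1 h2).1
    rw [this]
    simp only [Set.mem_singleton_iff]
    congr 1
    exact_mod_cast hlen
  · rintro rfl
    refine ⟨?_, sum_replicate_east m⟩
    intro s hs
    rw [List.eq_of_mem_replicate hs]
    exact Or.inl rfl

lemma delSet_north (m : ℕ) : delSet (0, (m : ℤ)) = {List.replicate m ((0:ℤ), (1:ℤ))} := by
  ext l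
  constructor
  · rintro ⟨h1, h2⟩
    have := fst_zero_replicate l h1 (by rw [h2])
    have hlen : (l.length : ℤ) = m := by
      rw [this] at h2; rw [sum_replicate_north] at h2
      exact (Prod.ext_iff.1 h2).2
    rw [this]
    simp only [Set.mem_singleton_iff]
    congr 1
    exact_mod_cast hlen
  · rintro rfl
    refine ⟨?_, sum_replicate_north m⟩
    intro s hs
    rw [List.eq_of_mem_replicate hs]
    exact Or.inr (Or.inl rfl)

lemma delSet_rec (a b : ℤ) (ha : 0 ≤ a) :
    delSet (a + 1, b + 1) =
      (fun l => ((1:ℤ),(0:ℤ)) :: l) '' delSet (a, b + 1) ∪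
      ((fun l => ((0:ℤ),(1:ℤ)) :: l) '' delSet (a + 1, b) ∪
       (fun l => ((1:ℤ),(1:ℤ)) :: l) '' delSet (a, b)) := by
  ext l
  constructor
  · rintro ⟨h1, h2⟩
    match l with
    | [] =>
      exfalso
      simp only [List.sum_nil, Prod.ext_iff, Prod.fst_zero, Prod.snd_zero] at h2
      omega
    | s :: t =>
      have ht : ∀ x ∈ t, IsDelStep x := fun x hx => h1 x (List.mem_cons_of_mem _ hx)
      rw [List.sum_cons] at h2
      rcases h1 s List.mem_cons_self with hs | hs | hs <;> subst hs
      · left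
        exact ⟨t, ⟨ht, by obtain ⟨hx, hy⟩ := Prod.ext_iff.1 h2; exact Prod.ext_iff.2 ⟨by simp at hx ⊢; omega, by simp at hy ⊢; omega⟩⟩, rfl⟩
      · right; left
        exact ⟨t, ⟨ht, by obtain ⟨hx, hy⟩ := Prod.ext_iff.1 h2; exact Prod.ext_iff.2 ⟨by simp at hx ⊢; omega, by simp at hy ⊢; omega⟩⟩, rfl⟩
      · right; right
        exact ⟨t, ⟨ht, by obtain ⟨hx, hy⟩ := Prod.ext_iff.1 h2; exact Prod.ext_iff.2 ⟨by simp at hx ⊢; omega, by simp at hy ⊢; omega⟩⟩, rfl⟩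
  · rintro (⟨t, ⟨h1, h2⟩, rfl⟩ | ⟨t, ⟨h1, h2⟩, rfl⟩ | ⟨t, ⟨h1, h2⟩, rfl⟩) <;>
    · constructor
      · intro s hs
        rcases List.mem_cons.1 hs with rfl | hs'
        · first
          | exact Or.inl rfl
          | exact Or.inr (Or.inl rfl)
          | exact Or.inr (Or.inr rfl)
        · exact h1 s hs'
      · rw [List.sum_cons, h2]
        simp only [Prod.mk_add_mk, Prod.mk.injEq]
        constructor <;> ring

lemma ncard_rec (a b : ℤ) (ha : 0 ≤ a) :
    (delSet (a + 1, b + 1)).ncard =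
      (delSet (a, b + 1)).ncard + (delSet (a + 1, b)).ncard + (delSet (a, b)).ncard := by
  have hinj : ∀ c : ℤ × ℤ, Function.Injective (fun l : List (ℤ × ℤ) => c :: l) :=
    fun c => List.cons_injective
  have hdisj1 : Disjoint ((fun l => ((1:ℤ),(0:ℤ)) :: l) '' delSet (a, b + 1))
      ((fun l => ((0:ℤ),(1:ℤ)) :: l) '' delSet (a + 1, b) ∪
       (fun l => ((1:ℤ),(1:ℤ)) :: l) '' delSet (a, b)) := by
    rw [Set.disjoint_left]
    rintro x ⟨t, _, rfl⟩ (⟨u, _, h⟩ | ⟨u, _, h⟩) <;> simp [Prod.ext_iff] at h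
  have hdisj2 : Disjoint ((fun l => ((0:ℤ),(1:ℤ)) :: l) '' delSet (a + 1, b))
      ((fun l => ((1:ℤ),(1:ℤ)) :: l) '' delSet (a, b)) := by
    rw [Set.disjoint_left]
    rintro x ⟨t, _, rfl⟩ ⟨u, _, h⟩
    simp [Prod.ext_iff] at h
  rw [delSet_rec a b ha,
    Set.ncard_union_eq hdisj1 ((delSet_finite _).image _)
      (((delSet_finite _).image _).union ((delSet_finite _).image _)),
    Set.ncard_union_eq hdisj2 ((delSet_finite _).image _) ((delSet_finite _).image _),
    Set.ncard_image_of_injective _ (hinj _), Set.ncard_image_of_injective _ (hinj _),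
    Set.ncard_image_of_injective _ (hinj _)]
  ring

def delD (n k : ℕ) : ℕ := ∑ i ∈ Finset.range (n + 1), n.choose i * k.choose i * 2 ^ i

lemma delD_pad (m j : ℕ) :
    ∑ i ∈ Finset.range (m + 2), m.choose i * j.choose i * 2 ^ i = delD m j := by
  rw [Finset.sum_range_succ, Nat.choose_succ_self]
  simp [delD]

lemma delD_zero (m : ℕ) : delD m 0 = 1 := by
  rw [delD, Finset.sum_range_succ']
  simp [Nat.choose_zero_succ]

lemma delD_rec (n k : ℕ) :
    delD (n + 1) (k + 1) = delD n (k + 1) + delD (n + 1) k + delD n k := by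
  have hL : delD (n+1) (k+1) =
      (∑ i ∈ range (n+1), (n.choose i * k.choose i * 2^(i+1) +
        n.choose i * k.choose (i+1) * 2^(i+1) +
        n.choose (i+1) * k.choose i * 2^(i+1) +
        n.choose (i+1) * k.choose (i+1) * 2^(i+1))) + 1 := by
    rw [delD, Finset.sum_range_succ']
    simp only [Nat.choose_zero_right, pow_zero, mul_one, one_mul]
    congr 1
    exact Finset.sum_congr rfl fun i _ => by
      rw [Nat.choose_succ_succ, Nat.choose_succ_succ]; ring
  have h1 : delD n (k+1) =
      (∑ i ∈ range (n+1), (n.choose (i+1) * k.choose i * 2^(i+1) +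
        n.choose (i+1) * k.choose (i+1) * 2^(i+1))) + 1 := by
    rw [← delD_pad n (k+1), Finset.sum_range_succ']
    simp only [Nat.choose_zero_right, pow_zero, mul_one, one_mul]
    congr 1
    exact Finset.sum_congr rfl fun i _ => by
      rw [Nat.choose_succ_succ k i]; ring
  have h2 : delD (n+1) k =
      (∑ i ∈ range (n+1), (n.choose i * k.choose (i+1) * 2^(i+1) +
        n.choose (i+1) * k.choose (i+1) * 2^(i+1))) + 1 := by
    rw [delD, Finset.sum_range_succ']
    simp only [Nat.choose_zero_right, pow_zero, mul_one, one_mul]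
    congr 1
    exact Finset.sum_congr rfl fun i _ => by
      rw [Nat.choose_succ_succ n i]; ring
  have h3 : delD n k =
      (∑ i ∈ range (n+1), n.choose (i+1) * k.choose (i+1) * 2^(i+1)) + 1 := by
    rw [← delD_pad n k, Finset.sum_range_succ']
    simp
  have hkey : (∑ i ∈ range (n+1), n.choose i * k.choose i * 2^(i+1)) = 2 * delD n k := by
    rw [delD, Finset.mul_sum]
    exact Finset.sum_congr rfl fun i _ => by ring
  rw [Finset.sum_add_distrib, Finset.sum_add_distrib, Finset.sum_add_distrib] at hL
  rw [Finset.sum_add_distrib] at h1 h2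
  omega

lemma main_count : ∀ n k : ℕ, (delSet ((n : ℤ), (k : ℤ))).ncard = delD n k := by
  intro n
  induction n with
  | zero =>
    intro k
    rw [show ((0 : ℕ) : ℤ) = (0 : ℤ) by norm_num, delSet_north k, Set.ncard_singleton]
    simp [delD]
  | succ n ihn =>
    intro k
    induction k with
    | zero =>
      rw [show ((0 : ℕ) : ℤ) = (0 : ℤ) by norm_num, delSet_east (n+1), Set.ncard_singleton,
        delD_zero]
    | succ k ihk =>
      rw [Nat.cast_succ, Nat.cast_succ, ncard_rec (n : ℤ) (k : ℤ) (Int.natCast_nonneg n),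
        ← Nat.cast_succ n, ← Nat.cast_succ k, ihn (k+1), ihk, ihn k, delD_rec]

theorem count_delannoy_paths (n k : ℕ) :
    Nat.card {l : List (ℤ × ℤ) //
        (∀ s ∈ l, IsDelStep s) ∧ l.sum = ((n : ℤ), (k : ℤ))} =
      ∑ i ∈ Finset.range (n + 1), n.choose i * k.choose i * 2 ^ i := by
  exact (Nat.card_coe_set_eq (delSet ((n : ℤ), (k : ℤ)))).trans (main_count n k)
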